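/- Let x ∈ ℕ^q with x_i ≥ 3 for all i, and let y be an integer optimal solution of the LP max 1^T y s.t. y ∈ cone of half-incidence vectors of S and y ≤ x, with y = Zc for an integer c. Then every nontrivial connected component S' of the support graph S_c satisfies: the complete S'-partite graph with part sizes (y_i)_{i ∈ V(S')} is connected and has at least three vertices. -/

import Mathlib

/-- If an edge `e` with `c e ≠ 0` is incident to `i`, then `y i ≥ 1`. -/
lemma aux_pos {q m : ℕ} {ep : Fin m → Fin q × Fin q} {c : Fin m → ℕ} {y : Fin q → ℕ}
    (hy : ∀ i, 2 * y i = ∑ e, ((if (ep e).1 = i then c e else 0)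
        + (if (ep e).2 = i then c e else 0)))
    {e : Fin m} (hce : c e ≠ 0) {i : Fin q} (hi : (ep e).1 = i ∨ (ep e).2 = i) :
    1 ≤ y i := by
  rcases Nat.eq_zero_or_pos (y i) with h0 | h
  · exfalso
    have hs := hy i
    rw [h0, Nat.mul_zero] at hs
    have hterm := (Finset.sum_eq_zero_iff.mp hs.symm) e (Finset.mem_univ e)
    obtain ⟨ha, hb⟩ := Nat.add_eq_zero.mp hterm
    rcases hi with h | h
    · rw [if_pos h] at ha; exact hce ha
    · rw [if_pos h] at hb; exact hce hb
  · exact h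

/-- If `y i ≥ 1`, then some edge with `c e ≠ 0` is incident to `i`. -/
lemma aux_edge {q m : ℕ} {ep : Fin m → Fin q × Fin q} {c : Fin m → ℕ} {y : Fin q → ℕ}
    (hy : ∀ i, 2 * y i = ∑ e, ((if (ep e).1 = i then c e else 0)
        + (if (ep e).2 = i then c e else 0)))
    {i : Fin q} (hyi : 1 ≤ y i) :
    ∃ e, c e ≠ 0 ∧ ((ep e).1 = i ∨ (ep e).2 = i) := by
  by_contra h
  push_neg at h
  have h0 : 2 * y i = 0 := by
    rw [hy i]
    apply Finset.sum_eq_zero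
    intro e _
    by_cases hc : c e = 0
    · simp [hc]
    · obtain ⟨h1, h2⟩ := h e hc
      rw [if_neg h1, if_neg h2]
      rfl
  omega

theorem nontrivial_component_blowup_connected_and_large
    (q m : ℕ) (ep : Fin m → Fin q × Fin q)
    (x : Fin q → ℕ) (hx : ∀ i, 3 ≤ x i)
    (c : Fin m → ℕ) (y : Fin q → ℕ)
    (hy : ∀ i, 2 * y i = ∑ e, ((if (ep e).1 = i then c e else 0)
        + (if (ep e).2 = i then c e else 0)))
    (hle : ∀ i, y i ≤ x i)
    (hopt : ∀ y' : Fin q → ℝ,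
      (∃ a : Fin m → ℝ, (∀ e, 0 ≤ a e) ∧
        ∀ i, y' i = ∑ e, ((if (ep e).1 = i then (1 : ℝ) else 0)
          + (if (ep e).2 = i then (1 : ℝ) else 0)) / 2 * a e) →
      (∀ i, y' i ≤ (x i : ℝ)) →
      ∑ i, y' i ≤ ∑ i, (y i : ℝ))
    (i0 : Fin q)
    (hnt : ∃ j, Relation.ReflTransGen
        (fun a b => ∃ e, c e ≠ 0 ∧ (ep e = (a, b) ∨ ep e = (b, a))) i0 j ∧
      ∃ e, c e ≠ 0 ∧ ((ep e).1 = j ∨ (ep e).2 = j)) :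
    (3 ≤ Nat.card {v : Σ i : Fin q, Fin (y i) //
        Relation.ReflTransGen
          (fun a b => ∃ e, c e ≠ 0 ∧ (ep e = (a, b) ∨ ep e = (b, a))) i0 v.1}) ∧
    (∀ v w : {v : Σ i : Fin q, Fin (y i) //
        Relation.ReflTransGen
          (fun a b => ∃ e, c e ≠ 0 ∧ (ep e = (a, b) ∨ ep e = (b, a))) i0 v.1},
      Relation.ReflTransGen
        (fun a b => a.1 ≠ b.1 ∧
          ∃ e, c e ≠ 0 ∧ (ep e = (a.1.1, b.1.1) ∨ ep e = (b.1.1, a.1.1))) v w) := by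
  classical
  set R : Fin q → Fin q → Prop :=
    fun a b => ∃ e, c e ≠ 0 ∧ (ep e = (a, b) ∨ ep e = (b, a)) with hRdef
  have hRsymm : Symmetric R := by
    intro a b ⟨e, h1, h2⟩
    exact ⟨e, h1, h2.symm⟩
  -- real version of hy
  have hyr : ∀ i, (y i : ℝ) = ∑ e, ((if (ep e).1 = i then (1:ℝ) else 0)
      + (if (ep e).2 = i then (1:ℝ) else 0)) / 2 * (c e : ℝ) := by
    intro i
    have h2 : ((2 * y i : ℕ) : ℝ) = ((∑ e, ((if (ep e).1 = i then c e else 0)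
        + (if (ep e).2 = i then c e else 0)) : ℕ) : ℝ) := by
      exact_mod_cast congrArg Nat.cast (hy i)
    push_cast at h2
    rw [Finset.sum_congr rfl (fun e _ => show ((if (ep e).1 = i then (1:ℝ) else 0)
      + (if (ep e).2 = i then (1:ℝ) else 0)) / 2 * (c e : ℝ)
      = ((if (ep e).1 = i then (c e : ℝ) else 0) + (if (ep e).2 = i then (c e:ℝ) else 0)) / 2
      from by split_ifs <;> ring)]
    rw [← Finset.sum_div]
    linarith
  -- saturation from optimality
  have hsat : ∀ e0 : Fin m, y (ep e0).1 = x (ep e0).1 ∨ y (ep e0).2 = x (ep e0).2 := by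
    intro e0
    by_contra hcon
    push_neg at hcon
    obtain ⟨h1, h2⟩ := hcon
    have h1n : y (ep e0).1 + 1 ≤ x (ep e0).1 := lt_of_le_of_ne (hle _) h1
    have h2n : y (ep e0).2 + 1 ≤ x (ep e0).2 := lt_of_le_of_ne (hle _) h2
    have h1' : (y (ep e0).1 : ℝ) + 1 ≤ x (ep e0).1 := by exact_mod_cast h1n
    have h2' : (y (ep e0).2 : ℝ) + 1 ≤ x (ep e0).2 := by exact_mod_cast h2n
    set y' : Fin q → ℝ := fun i => (y i : ℝ)
      + ((if (ep e0).1 = i then (1:ℝ) else 0) + (if (ep e0).2 = i then (1:ℝ) else 0)) / 2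
      with hy'def
    have hfeas : ∃ a : Fin m → ℝ, (∀ e, 0 ≤ a e) ∧
        ∀ i, y' i = ∑ e, ((if (ep e).1 = i then (1 : ℝ) else 0)
          + (if (ep e).2 = i then (1 : ℝ) else 0)) / 2 * a e := by
      refine ⟨fun e => (c e : ℝ) + (if e = e0 then 1 else 0), fun e => by positivity,
        fun i => ?_⟩
      have hterm : ∀ e : Fin m, ((if (ep e).1 = i then (1 : ℝ) else 0)
          + (if (ep e).2 = i then (1 : ℝ) else 0)) / 2 * ((c e : ℝ) + (if e = e0 then 1 else 0))
        = ((if (ep e).1 = i then (1 : ℝ) else 0)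
          + (if (ep e).2 = i then (1 : ℝ) else 0)) / 2 * (c e : ℝ)
          + (if e = e0 then ((if (ep e).1 = i then (1 : ℝ) else 0)
          + (if (ep e).2 = i then (1 : ℝ) else 0)) / 2 else 0) := by
        intro e; split_ifs <;> ring
      rw [Finset.sum_congr rfl (fun e _ => hterm e), Finset.sum_add_distrib,
        Finset.sum_ite_eq' Finset.univ e0, if_pos (Finset.mem_univ e0)]
      rw [hy'def, ← hyr i]
    have hbnd : ∀ i, y' i ≤ (x i : ℝ) := by
      intro i
      have hxi : (y i : ℝ) ≤ x i := by exact_mod_cast hle i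
      simp only [hy'def]
      split_ifs with hA hB hB
      · have := h1'; rw [hA] at this; linarith
      · have := h1'; rw [hA] at this; linarith
      · have := h2'; rw [hB] at this; linarith
      · linarith
    have hsum := hopt y' hfeas hbnd
    have hzsum : ∑ i, y' i = (∑ i, (y i : ℝ)) + 1 := by
      simp only [hy'def]
      rw [Finset.sum_add_distrib, ← Finset.sum_div, Finset.sum_add_distrib,
        Finset.sum_ite_eq Finset.univ (ep e0).1 (fun _ => (1:ℝ)),
        Finset.sum_ite_eq Finset.univ (ep e0).2 (fun _ => (1:ℝ))]
      simp
    rw [hzsum] at hsum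
    linarith
  -- the within-part connection lemma
  have hsame : ∀ (u1 u2 : {v : Σ i : Fin q, Fin (y i) // Relation.ReflTransGen R i0 v.1}),
      u1.1.1 = u2.1.1 →
      Relation.ReflTransGen (fun a b => a.1 ≠ b.1 ∧ ∃ e, c e ≠ 0 ∧
        (ep e = (a.1.1, b.1.1) ∨ ep e = (b.1.1, a.1.1))) u1 u2 := by
    intro u1 u2 h12
    by_cases heq : u1 = u2
    · rw [heq]
    · have hne : u1.1 ≠ u2.1 := fun h => heq (Subtype.ext h)
      have hy1 : 1 ≤ y u1.1.1 := (u1.1.2).pos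
      obtain ⟨e, hce, hinc⟩ := aux_edge hy hy1
      obtain ⟨k, hpe⟩ : ∃ k, ep e = (u1.1.1, k) ∨ ep e = (k, u1.1.1) := by
        rcases hinc with h | h
        · exact ⟨(ep e).2, Or.inl (by rw [← h])⟩
        · exact ⟨(ep e).1, Or.inr (by rw [← h])⟩
      by_cases hk : k = u1.1.1
      · refine Relation.ReflTransGen.single ⟨hne, e, hce, ?_⟩
        subst hk
        rcases hpe with h | h <;> exact Or.inl (by rw [← h12]; exact h)
      · have hik : (ep e).1 = k ∨ (ep e).2 = k := by
          rcases hpe with h | h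
          · exact Or.inr (by rw [h])
          · exact Or.inl (by rw [h])
        have hyk : 1 ≤ y k := aux_pos hy hce hik
        have hRk : R u1.1.1 k := ⟨e, hce, hpe⟩
        have hmemk : Relation.ReflTransGen R i0 k := u1.2.tail hRk
        refine Relation.ReflTransGen.head
          (b := (⟨⟨k, ⟨0, hyk⟩⟩, hmemk⟩ :
            {v : Σ i : Fin q, Fin (y i) // Relation.ReflTransGen R i0 v.1}))
          ⟨fun h => hk (congrArg Sigma.fst h).symm, e, hce, hpe⟩
          (Relation.ReflTransGen.single
            ⟨fun h => hk ((congrArg Sigma.fst h).trans h12.symm), e, hce, ?_⟩)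
        rcases hpe with h | h
        · exact Or.inr (by rw [← h12]; exact h)
        · exact Or.inl (by rw [← h12]; exact h)
  -- the main connection claim
  have claim : ∀ (v : {v : Σ i : Fin q, Fin (y i) // Relation.ReflTransGen R i0 v.1})
      (j : Fin q), Relation.ReflTransGen R v.1.1 j →
      ∀ (t : Fin (y j)) (hmem : Relation.ReflTransGen R i0 j),
      Relation.ReflTransGen (fun a b => a.1 ≠ b.1 ∧ ∃ e, c e ≠ 0 ∧
        (ep e = (a.1.1, b.1.1) ∨ ep e = (b.1.1, a.1.1))) v ⟨⟨j, t⟩, hmem⟩ := by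
    intro v j hpath
    induction hpath with
    | refl => intro t hmem; exact hsame v ⟨⟨v.1.1, t⟩, hmem⟩ rfl
    | @tail b k hab hbc ih =>
      intro t hmem
      obtain ⟨e, hce, hpe⟩ := hbc
      have hyb : 1 ≤ y b := aux_pos hy hce (by
        rcases hpe with h | h
        · exact Or.inl (by rw [h])
        · exact Or.inr (by rw [h]))
      have hmemb : Relation.ReflTransGen R i0 b := v.2.trans hab
      by_cases hbk : b = k
      · subst hbk
        exact (ih ⟨0, hyb⟩ hmemb).trans (hsame ⟨⟨b, ⟨0, hyb⟩⟩, hmemb⟩ ⟨⟨b, t⟩, hmem⟩ rfl)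
      · exact (ih ⟨0, hyb⟩ hmemb).tail ⟨fun h => hbk (congrArg Sigma.fst h), e, hce, hpe⟩
  -- locate a saturated vertex in the component
  obtain ⟨j, hj, e0, hce0, hje⟩ := hnt
  have hRab : R (ep e0).1 (ep e0).2 := ⟨e0, hce0, Or.inl rfl⟩
  have hmema : Relation.ReflTransGen R i0 (ep e0).1 := by
    rcases hje with h | h
    · rw [h]; exact hj
    · exact Relation.ReflTransGen.tail (by rw [h]; exact hj) (hRsymm hRab)
  have hmemb : Relation.ReflTransGen R i0 (ep e0).2 := by
    rcases hje with h | h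
    · exact Relation.ReflTransGen.tail (by rw [h]; exact hj) hRab
    · rw [h]; exact hj
  obtain ⟨j1, hmemj, hy3⟩ : ∃ j1, Relation.ReflTransGen R i0 j1 ∧ 3 ≤ y j1 := by
    rcases hsat e0 with hsx | hsx
    · exact ⟨_, hmema, by rw [hsx]; exact hx _⟩
    · exact ⟨_, hmemb, by rw [hsx]; exact hx _⟩
  constructor
  · have hinj : Function.Injective (fun t : Fin (y j1) =>
        (⟨⟨j1, t⟩, hmemj⟩ :
          {v : Σ i : Fin q, Fin (y i) // Relation.ReflTransGen R i0 v.1})) := by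
      intro t1 t2 h
      simpa using h
    calc 3 ≤ y j1 := hy3
      _ = Nat.card (Fin (y j1)) := by simp
      _ ≤ _ := Nat.card_le_card_of_injective _ hinj
  · intro v w
    have hvw : Relation.ReflTransGen R v.1.1 w.1.1 :=
      (haveI : Std.Symm R := ⟨hRsymm⟩; Std.Symm.symm (r := Relation.ReflTransGen R) _ _ v.2).trans w.2
    exact claim v w.1.1 hvw w.1.2 w.2
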